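/- Let u, v : V → ℝ^d be two vector-valued signals on the nodes of a connected weighted graph G = (V, E, A) with block-incidence matrix D. Then Σ_{i∈V} (u^(i))ᵀ v^(i) ≤ (1/|V|)·(Σ_{i∈V} v^(i))ᵀ(Σ_{j∈V} u^(j)) + ‖(D†)ᵀ v‖_{2,∞} · ‖u‖_TV, where ‖u‖_TV = Σ_{{i,j}∈E} A_{ij}‖u^(j) − u^(i)‖₂ and ‖w‖_{2,∞} = max_e ‖w^(e)‖₂ over edge blocks. -/

import Mathlib

open Finset

/-- Lemma 1: For vector-valued signals u, v on a connected weighted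
graph with block-incidence operator D (with pseudoinverse D†),
Σᵢ ⟨u^(i), v^(i)⟩ ≤ (1/|V|)·⟨Σᵢ v^(i), Σⱼ u^(j)⟩ + ‖(D†)ᵀv‖_{2,∞}·‖u‖_TV. -/
theorem networked_decomposition_inequality
    (N E d : ℕ) (hN : 0 < N)
    (inc : Fin E → Fin N × Fin N) (hloop : ∀ e, (inc e).1 ≠ (inc e).2)
    (A : Fin E → ℝ) (hA : ∀ e, 0 < A e)
    (hconn : ∀ i j : Fin N, Relation.ReflTransGen
      (fun a b => ∃ e, inc e = (a, b) ∨ inc e = (b, a)) i j)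
    -- block incidence operator D
    (D : (Fin N → EuclideanSpace ℝ (Fin d)) → (Fin E → EuclideanSpace ℝ (Fin d)))
    (hDlin : IsLinearMap ℝ D)
    (hD : ∀ w e, D w e = A e • (w (inc e).1 - w (inc e).2))
    -- G = D†, the Moore–Penrose pseudoinverse of D (Penrose equations)
    (G : (Fin E → EuclideanSpace ℝ (Fin d)) → (Fin N → EuclideanSpace ℝ (Fin d)))
    (hGlin : IsLinearMap ℝ G)
    (hPen1 : ∀ w, D (G (D w)) = D w) (hPen2 : ∀ x, G (D (G x)) = G x)
    (hPen3 : ∀ x y, (∑ e, inner ℝ (D (G x) e) (y e) : ℝ) = ∑ e, inner ℝ (x e) (D (G y) e))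
    (hPen4 : ∀ w w', (∑ i, inner ℝ (G (D w) i) (w' i) : ℝ) = ∑ i, inner ℝ (w i) (G (D w') i))
    -- Gt = (D†)ᵀ, the transpose of G
    (Gt : (Fin N → EuclideanSpace ℝ (Fin d)) → (Fin E → EuclideanSpace ℝ (Fin d)))
    (hGt : ∀ v x, (∑ e, inner ℝ (Gt v e) (x e) : ℝ) = ∑ i, inner ℝ (v i) (G x i))
    (u v : Fin N → EuclideanSpace ℝ (Fin d)) :
    (∑ i, inner ℝ (u i) (v i) : ℝ) ≤
      (1 / (N : ℝ)) * (inner ℝ (∑ i, v i) (∑ j, u j) : ℝ) +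
      (⨆ e : Fin E, ‖Gt v e‖) *
        (∑ e, A e * ‖u (inc e).2 - u (inc e).1‖) := by
  classical
  have hNne : (N : ℝ) ≠ 0 := Nat.cast_ne_zero.mpr hN.ne'
  -- kernel of D consists of constant signals
  have hker : ∀ w : Fin N → EuclideanSpace ℝ (Fin d), D w = 0 →
      ∀ i j : Fin N, w i = w j := by
    intro w hw i j
    have hstep : ∀ a b : Fin N, (∃ e, inc e = (a, b) ∨ inc e = (b, a)) → w a = w b := by
      rintro a b ⟨e, h | h⟩ <;>
      · have h0 : D w e = 0 := by rw [hw]; rfl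
        rw [hD] at h0
        have h2 : w (inc e).1 - w (inc e).2 = 0 := by
          rcases smul_eq_zero.mp h0 with h' | h'
          · exact absurd h' (ne_of_gt (hA e))
          · exact h'
        rw [h] at h2
        simp only [sub_eq_zero] at h2
        first
          | exact h2
          | exact h2.symm
    have h := hconn i j
    induction h with
    | refl => rfl
    | tail _ hs ih => exact ih.trans (hstep _ _ hs)
  -- G ∘ D is the centering projection
  have hproj : ∀ w : Fin N → EuclideanSpace ℝ (Fin d),
      ∀ i, G (D w) i = w i - (N : ℝ)⁻¹ • ∑ j, w j := by
    intro w
    set m : EuclideanSpace ℝ (Fin d) := (N : ℝ)⁻¹ • ∑ j, w j with hm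
    have hDc : D (fun _ : Fin N => m) = 0 := by
      funext e; rw [hD]; simp
    have hDsub : D (w - fun _ : Fin N => m) = D w := by
      rw [hDlin.map_sub, hDc, sub_zero]
    -- the sum of G (D w) vanishes
    have hsum0 : ∑ i, G (D w) i = 0 := by
      set S : EuclideanSpace ℝ (Fin d) := ∑ i, G (D w) i with hS
      have hDcS : D (fun _ : Fin N => S) = 0 := by
        funext e; rw [hD]; simp
      have hGc : G (D (fun _ : Fin N => S)) = 0 := by
        rw [hDcS, hGlin.map_zero]
      have h1 : (∑ i, inner ℝ (G (D w) i) ((fun _ : Fin N => S) i) : ℝ) = 0 := by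
        rw [hPen4 w (fun _ : Fin N => S), hGc]
        simp
      have h2 : (inner ℝ S S : ℝ) = 0 := by
        rw [hS, sum_inner] at *
        simpa using h1
      simpa [hS] using inner_self_eq_zero.mp h2
    -- the difference is a constant with zero sum
    set q : Fin N → EuclideanSpace ℝ (Fin d) := (w - fun _ : Fin N => m) - G (D w) with hqdef
    have hqconst : ∀ i j, q i = q j := by
      apply hker
      rw [hqdef, hDlin.map_sub, hDsub, hPen1, sub_self]
    have hsumw : ∑ i, (w i - m) = 0 := by
      rw [Finset.sum_sub_distrib, Finset.sum_const, hm, Finset.card_univ, Fintype.card_fin]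
      rw [← Nat.cast_smul_eq_nsmul ℝ, smul_smul, mul_inv_cancel₀ hNne, one_smul, sub_self]
    have hqsum : ∑ i, q i = 0 := by
      simp only [hqdef, Pi.sub_apply]
      rw [Finset.sum_sub_distrib, hsum0, sub_zero, hsumw]
    intro i
    have hqi : (N : ℝ) • q i = 0 := by
      have : ∑ j, q j = ∑ _j : Fin N, q i := Finset.sum_congr rfl fun j _ => hqconst j i
      rw [hqsum] at this
      rw [Finset.sum_const, Finset.card_univ, Fintype.card_fin,
        ← Nat.cast_smul_eq_nsmul ℝ] at this
      exact this.symm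
    have hq0 : q i = 0 := by
      rcases smul_eq_zero.mp hqi with h | h
      · exact absurd h hNne
      · exact h
    have : w i - m - G (D w) i = 0 := by
      simpa [hqdef] using hq0
    exact (sub_eq_zero.mp this).symm
  -- decompose the inner product sum
  have hsplit : (∑ i, inner ℝ (u i) (v i) : ℝ) =
      (1 / (N : ℝ)) * (inner ℝ (∑ i, v i) (∑ j, u j) : ℝ) +
      ∑ e, (inner ℝ (Gt v e) (D u e) : ℝ) := by
    have hrw : ∀ i, u i = (N : ℝ)⁻¹ • (∑ j, u j) + G (D u) i := by
      intro i
      rw [hproj u i]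
      abel
    calc (∑ i, inner ℝ (u i) (v i) : ℝ)
        = ∑ i, ((inner ℝ ((N : ℝ)⁻¹ • (∑ j, u j)) (v i) : ℝ) +
            (inner ℝ (G (D u) i) (v i) : ℝ)) := by
          refine Finset.sum_congr rfl fun i _ => ?_
          rw [← inner_add_left, ← hrw i]
      _ = (1 / (N : ℝ)) * (inner ℝ (∑ i, v i) (∑ j, u j) : ℝ) +
          ∑ e, (inner ℝ (Gt v e) (D u e) : ℝ) := by
          rw [Finset.sum_add_distrib]
          congr 1
          · rw [← inner_sum]
            rw [real_inner_smul_left, real_inner_comm, one_div]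
          · rw [hGt v (D u)]
            refine Finset.sum_congr rfl fun i _ => real_inner_comm _ _
  rw [hsplit]
  gcongr ?_ + ?_
  · exact le_refl _
  · calc (∑ e, (inner ℝ (Gt v e) (D u e) : ℝ))
        ≤ ∑ e, (⨆ e' : Fin E, ‖Gt v e'‖) * ‖D u e‖ := by
          refine Finset.sum_le_sum fun e _ => ?_
          calc (inner ℝ (Gt v e) (D u e) : ℝ) ≤ ‖Gt v e‖ * ‖D u e‖ :=
                real_inner_le_norm _ _
            _ ≤ (⨆ e' : Fin E, ‖Gt v e'‖) * ‖D u e‖ := by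
                apply mul_le_mul_of_nonneg_right _ (norm_nonneg _)
                exact le_ciSup (f := fun e' : Fin E => ‖Gt v e'‖) (Set.Finite.bddAbove (Set.finite_range _)) e
      _ = (⨆ e : Fin E, ‖Gt v e‖) * ∑ e, A e * ‖u (inc e).2 - u (inc e).1‖ := by
          rw [Finset.mul_sum]
          refine Finset.sum_congr rfl fun e _ => ?_
          rw [hD, norm_smul, Real.norm_eq_abs, abs_of_pos (hA e), norm_sub_rev]
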